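/- Let L_n : ℝⁿ → ℂ be defined by L_n(x) = (i + x₁ + ⋯ + xₙ)⁻¹ · ∏_{k=1}^n (i + x_k)⁻¹, where x_k are the coordinates of x. Then L_n is integrable on ℝⁿ with respect to Lebesgue measure. -/

import Mathlib

open MeasureTheory

open MeasureTheory Real Finset
open scoped ENNReal

noncomputable section
namespace LnAux

lemma cont_br (r : ℝ) : Continuous fun t : ℝ => (1 + |t|) ^ r :=
  (continuous_const.add continuous_abs).rpow_const (fun x => Or.inl (by positivity : (1:ℝ) + |x| ≠ 0))

lemma meas_br (r : ℝ) : Measurable fun t : ℝ => ENNReal.ofReal ((1 + |t|) ^ r) :=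
  (ENNReal.continuous_ofReal.comp (cont_br r)).measurable

lemma meas_br2 (r₁ r₂ c : ℝ) :
    Measurable fun x : ℝ => ENNReal.ofReal ((1 + |x|) ^ r₁ * (1 + |c + x|) ^ r₂) := by
  have h : Continuous fun x : ℝ => (1 + |x|) ^ r₁ * (1 + |c + x|) ^ r₂ :=
    (cont_br r₁).mul ((cont_br r₂).comp (continuous_const.add continuous_id))
  exact (ENNReal.continuous_ofReal.comp h).measurable

lemma lint_br_lt_top {s : ℝ} (hs : 1 < s) :
    ∫⁻ x : ℝ, ENNReal.ofReal ((1 + |x|) ^ (-s)) < ∞ := by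
  have h : Integrable (fun x : ℝ => (1 + ‖x‖) ^ (-s)) :=
    integrable_one_add_norm (by simpa using hs)
  have h2 := h.hasFiniteIntegral
  rw [HasFiniteIntegral] at h2
  convert h2 using 1
  refine lintegral_congr fun x => ?_
  rw [← ofReal_norm]
  simp only [Real.norm_eq_abs]
  rw [abs_of_nonneg (by positivity : (0:ℝ) ≤ (1 + |x|) ^ (-s))]

lemma lint_shift (r : ℝ) (c : ℝ) :
    ∫⁻ x : ℝ, ENNReal.ofReal ((1 + |c + x|) ^ r) = ∫⁻ x : ℝ, ENNReal.ofReal ((1 + |x|) ^ r) :=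
  (measurePreserving_add_left volume c).lintegral_comp (meas_br r)

lemma min_bound {u v α β : ℝ} (hu : 1 ≤ u) (hv : 1 ≤ v) (hα : 0 ≤ α) (hβ : 0 ≤ β) :
    u ^ (-α) * v ^ (-β) ≤ u ^ (-(α + β)) + v ^ (-(α + β)) := by
  have hu0 : (0:ℝ) < u := lt_of_lt_of_le one_pos hu
  have hv0 : (0:ℝ) < v := lt_of_lt_of_le one_pos hv
  rcases le_total u v with h | h
  · have h1 : v ^ (-β) ≤ u ^ (-β) := by
      rw [Real.rpow_neg hu0.le, Real.rpow_neg hv0.le]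
      exact inv_anti₀ (Real.rpow_pos_of_pos hu0 β) (Real.rpow_le_rpow hu0.le h hβ)
    calc u ^ (-α) * v ^ (-β) ≤ u ^ (-α) * u ^ (-β) :=
          mul_le_mul_of_nonneg_left h1 (Real.rpow_nonneg hu0.le _)
      _ = u ^ (-(α + β)) := by rw [← Real.rpow_add hu0]; ring_nf
      _ ≤ _ := le_add_of_nonneg_right (Real.rpow_nonneg hv0.le _)
  · have h1 : u ^ (-α) ≤ v ^ (-α) := by
      rw [Real.rpow_neg hu0.le, Real.rpow_neg hv0.le]
      exact inv_anti₀ (Real.rpow_pos_of_pos hv0 α) (Real.rpow_le_rpow hv0.le h hα)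
    calc u ^ (-α) * v ^ (-β) ≤ v ^ (-α) * v ^ (-β) :=
          mul_le_mul_of_nonneg_right h1 (Real.rpow_nonneg hv0.le _)
      _ = v ^ (-(α + β)) := by rw [← Real.rpow_add hv0]; ring_nf
      _ ≤ _ := le_add_of_nonneg_left (Real.rpow_nonneg hu0.le _)

lemma lint_two_br {α β : ℝ} (hα : 0 ≤ α) (hβ : 0 ≤ β) (c : ℝ) :
    ∫⁻ x : ℝ, ENNReal.ofReal ((1 + |x|) ^ (-α) * (1 + |c + x|) ^ (-β))
      ≤ 2 * ∫⁻ x : ℝ, ENNReal.ofReal ((1 + |x|) ^ (-(α + β))) := by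
  have hpt : ∀ x : ℝ, ENNReal.ofReal ((1 + |x|) ^ (-α) * (1 + |c + x|) ^ (-β))
      ≤ ENNReal.ofReal ((1 + |x|) ^ (-(α + β))) + ENNReal.ofReal ((1 + |c + x|) ^ (-(α + β))) := by
    intro x
    refine le_trans (ENNReal.ofReal_le_ofReal
      (min_bound (by simp [abs_nonneg]) (by simp [abs_nonneg]) hα hβ)) ?_
    exact ENNReal.ofReal_add_le
  calc ∫⁻ x : ℝ, ENNReal.ofReal ((1 + |x|) ^ (-α) * (1 + |c + x|) ^ (-β))
      ≤ ∫⁻ x : ℝ, (ENNReal.ofReal ((1 + |x|) ^ (-(α + β)))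
          + ENNReal.ofReal ((1 + |c + x|) ^ (-(α + β)))) := lintegral_mono hpt
    _ = (∫⁻ x : ℝ, ENNReal.ofReal ((1 + |x|) ^ (-(α + β))))
          + ∫⁻ x : ℝ, ENNReal.ofReal ((1 + |c + x|) ^ (-(α + β))) :=
        lintegral_add_left (meas_br _) _
    _ = 2 * ∫⁻ x : ℝ, ENNReal.ofReal ((1 + |x|) ^ (-(α + β))) := by
        rw [lint_shift, two_mul]

lemma key_pt {u v w b b' : ℝ} (hu : 1 ≤ u) (hv : 1 ≤ v) (hw : 1 ≤ w)
    (hwuv : w ≤ u + v) (hb' : 0 ≤ b') :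
    u ^ (-(1:ℝ)) * v ^ (-b) ≤
      2 ^ b' * w ^ (-b') * (u ^ (b' - 1) * v ^ (-b) + u ^ (-(1:ℝ)) * v ^ (b' - b)) := by
  have hu0 : (0:ℝ) < u := lt_of_lt_of_le one_pos hu
  have hv0 : (0:ℝ) < v := lt_of_lt_of_le one_pos hv
  have hw0 : (0:ℝ) < w := lt_of_lt_of_le one_pos hw
  have hwb : w ^ b' ≤ 2 ^ b' * (u ^ b' + v ^ b') := by
    have hmax : u + v ≤ 2 * max u v := by
      rw [two_mul]; exact add_le_add (le_max_left u v) (le_max_right u v)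
    have hmax2 : (max u v) ^ b' ≤ u ^ b' + v ^ b' := by
      rcases le_total u v with h | h
      · rw [max_eq_right h]; exact le_add_of_nonneg_left (by positivity)
      · rw [max_eq_left h]; exact le_add_of_nonneg_right (by positivity)
    calc w ^ b' ≤ (2 * max u v) ^ b' :=
          Real.rpow_le_rpow hw0.le (le_trans hwuv hmax) hb'
      _ = 2 ^ b' * (max u v) ^ b' := Real.mul_rpow (by norm_num) (by positivity)
      _ ≤ 2 ^ b' * (u ^ b' + v ^ b') :=
          mul_le_mul_of_nonneg_left hmax2 (by positivity)
  have e1 : u ^ b' * u ^ (-(1:ℝ)) = u ^ (b' - 1) := by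
    rw [← Real.rpow_add hu0, ← sub_eq_add_neg]
  have e2 : v ^ b' * v ^ (-b) = v ^ (b' - b) := by
    rw [← Real.rpow_add hv0, ← sub_eq_add_neg]
  have e3 : w ^ b' * w ^ (-b') = 1 := by
    rw [← Real.rpow_add hw0, add_neg_cancel, Real.rpow_zero]
  calc u ^ (-(1:ℝ)) * v ^ (-b)
      = (w ^ b' * (u ^ (-(1:ℝ)) * v ^ (-b))) * w ^ (-b') := by
        have h : (w ^ b' * (u ^ (-(1:ℝ)) * v ^ (-b))) * w ^ (-b')
            = (w ^ b' * w ^ (-b')) * (u ^ (-(1:ℝ)) * v ^ (-b)) := by ring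
        rw [h, e3, one_mul]
    _ ≤ ((2 ^ b' * (u ^ b' + v ^ b')) * (u ^ (-(1:ℝ)) * v ^ (-b))) * w ^ (-b') := by
        refine mul_le_mul_of_nonneg_right (mul_le_mul_of_nonneg_right hwb ?_) (by positivity)
        positivity
    _ = 2 ^ b' * w ^ (-b') * (u ^ (b' - 1) * v ^ (-b) + u ^ (-(1:ℝ)) * v ^ (b' - b)) := by
        rw [← e1, ← e2]; ring

/-- Key one-dimensional estimate. -/
lemma key {b b' : ℝ} (hb'1 : 2⁻¹ < b') (hbb' : b' < b) (hb1 : b ≤ 1) :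
    ∃ K : ℝ≥0∞, K ≠ ∞ ∧ ∀ c : ℝ,
      ∫⁻ x : ℝ, ENNReal.ofReal ((1 + |x|) ^ (-(1:ℝ)) * (1 + |c + x|) ^ (-b))
        ≤ K * ENNReal.ofReal ((1 + |c|) ^ (-b')) := by
  have hb'0 : (0:ℝ) ≤ b' := le_of_lt (lt_trans (by norm_num) hb'1)
  have hb0 : (0:ℝ) ≤ b := le_of_lt (lt_of_le_of_lt hb'0 hbb')
  have hs₁ : 1 < (1 - b') + b := by linarith
  have hs₂ : 1 < 1 + (b - b') := by linarith
  set J₁ : ℝ≥0∞ := ∫⁻ x : ℝ, ENNReal.ofReal ((1 + |x|) ^ (-((1 - b') + b))) with hJ₁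
  set J₂ : ℝ≥0∞ := ∫⁻ x : ℝ, ENNReal.ofReal ((1 + |x|) ^ (-(1 + (b - b')))) with hJ₂
  refine ⟨ENNReal.ofReal (2 ^ b') * (2 * J₁ + 2 * J₂), ?_, fun c => ?_⟩
  · exact ENNReal.mul_ne_top ENNReal.ofReal_ne_top (by
      have h1 := lint_br_lt_top hs₁
      have h2 := lint_br_lt_top hs₂
      rw [← hJ₁] at h1; rw [← hJ₂] at h2
      exact ENNReal.add_ne_top.2 ⟨ENNReal.mul_ne_top (by norm_num) h1.ne,
        ENNReal.mul_ne_top (by norm_num) h2.ne⟩)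
  · -- pointwise bound then integrate
    have hpt : ∀ x : ℝ,
        ENNReal.ofReal ((1 + |x|) ^ (-(1:ℝ)) * (1 + |c + x|) ^ (-b))
          ≤ (ENNReal.ofReal (2 ^ b') * ENNReal.ofReal ((1 + |c|) ^ (-b'))) *
            (ENNReal.ofReal ((1 + |x|) ^ (b' - 1) * (1 + |c + x|) ^ (-b))
              + ENNReal.ofReal ((1 + |x|) ^ (-(1:ℝ)) * (1 + |c + x|) ^ (b' - b))) := by
      intro x
      have hw : (1:ℝ) + |c| ≤ (1 + |x|) + (1 + |c + x|) := by
        have : |c| ≤ |x| + |c + x| := by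
          have := abs_add_le (-x) (c + x)  -- |c| = |(-x) + (c+x)|
          simpa [abs_neg, neg_add_cancel_left] using this
        linarith
      have h := key_pt (u := 1 + |x|) (v := 1 + |c + x|) (w := 1 + |c|) (b := b) (b' := b')
        (by simp [abs_nonneg]) (by simp [abs_nonneg]) (by simp [abs_nonneg]) hw hb'0
      calc ENNReal.ofReal ((1 + |x|) ^ (-(1:ℝ)) * (1 + |c + x|) ^ (-b))
          ≤ ENNReal.ofReal (2 ^ b' * (1 + |c|) ^ (-b') *
              ((1 + |x|) ^ (b' - 1) * (1 + |c + x|) ^ (-b)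
                + (1 + |x|) ^ (-(1:ℝ)) * (1 + |c + x|) ^ (b' - b))) :=
            ENNReal.ofReal_le_ofReal h
        _ ≤ _ := by
            rw [ENNReal.ofReal_mul (by positivity), ENNReal.ofReal_mul (by positivity)]
            exact mul_le_mul_right ENNReal.ofReal_add_le _
    calc ∫⁻ x : ℝ, ENNReal.ofReal ((1 + |x|) ^ (-(1:ℝ)) * (1 + |c + x|) ^ (-b))
        ≤ ∫⁻ x : ℝ, (ENNReal.ofReal (2 ^ b') * ENNReal.ofReal ((1 + |c|) ^ (-b'))) *
            (ENNReal.ofReal ((1 + |x|) ^ (b' - 1) * (1 + |c + x|) ^ (-b))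
              + ENNReal.ofReal ((1 + |x|) ^ (-(1:ℝ)) * (1 + |c + x|) ^ (b' - b))) :=
          lintegral_mono hpt
      _ = (ENNReal.ofReal (2 ^ b') * ENNReal.ofReal ((1 + |c|) ^ (-b'))) *
            ((∫⁻ x : ℝ, ENNReal.ofReal ((1 + |x|) ^ (b' - 1) * (1 + |c + x|) ^ (-b)))
              + ∫⁻ x : ℝ, ENNReal.ofReal ((1 + |x|) ^ (-(1:ℝ)) * (1 + |c + x|) ^ (b' - b))) := by
          rw [lintegral_const_mul' _ _ (ENNReal.mul_ne_top ENNReal.ofReal_ne_top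
            ENNReal.ofReal_ne_top), lintegral_add_left (meas_br2 _ _ _)]
      _ ≤ (ENNReal.ofReal (2 ^ b') * ENNReal.ofReal ((1 + |c|) ^ (-b'))) *
            (2 * J₁ + 2 * J₂) := by
          refine mul_le_mul_right (add_le_add ?_ ?_) _
          · have h := lint_two_br (α := 1 - b') (β := b) (by linarith) hb0 c
            have he : b' - 1 = -(1 - b') := by ring
            rw [he]; exact h
          · have h := lint_two_br (α := 1) (β := b - b') (by norm_num) (by linarith) c
            have he : b' - b = -(b - b') := by ring
            rw [he]; exact h
      _ = ENNReal.ofReal (2 ^ b') * (2 * J₁ + 2 * J₂) * ENNReal.ofReal ((1 + |c|) ^ (-b')) := by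
          ring

def Fm (m : ℕ) (c : ℝ) : (Fin m → ℝ) → ℝ≥0∞ := fun x =>
  (∏ k, ENNReal.ofReal ((1 + |x k|) ^ (-(1:ℝ)))) *
    ENNReal.ofReal ((1 + |c + ∑ k, x k|) ^ (-(1:ℝ)))

lemma meas_Fm (m : ℕ) (c : ℝ) : Measurable (Fm m c) := by
  have msum : Measurable fun x : Fin m → ℝ => ∑ k, x k :=
    Finset.measurable_sum _ fun k _ => measurable_pi_apply k
  exact (Finset.measurable_prod _ fun k _ =>
      (meas_br (-(1:ℝ))).comp (measurable_pi_apply k)).mul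
    ((meas_br (-(1:ℝ))).comp (measurable_const.add msum))

lemma fubini_Fm (n : ℕ) (c : ℝ) :
    ∫⁻ x : Fin (n+1) → ℝ, Fm (n+1) c x
      = ∫⁻ a : ℝ, ENNReal.ofReal ((1 + |a|) ^ (-(1:ℝ))) *
          ∫⁻ y : Fin n → ℝ, Fm n (c + a) y := by
  have hmp := (measurePreserving_piFinSuccAbove
      (fun _ : Fin (n+1) => (volume : Measure ℝ)) 0).symm
  have hcomp := hmp.lintegral_comp (meas_Fm (n+1) c)
  rw [volume_pi, ← hcomp]
  have hmeas : AEMeasurable (fun z : ℝ × (Fin n → ℝ) =>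
      Fm (n+1) c ((MeasurableEquiv.piFinSuccAbove (fun _ : Fin (n+1) => ℝ) 0).symm z))
      (volume.prod (Measure.pi fun _ => volume)) :=
    ((meas_Fm (n+1) c).comp
      (MeasurableEquiv.piFinSuccAbove (fun _ : Fin (n+1) => ℝ) 0).symm.measurable).aemeasurable
  rw [lintegral_prod _ hmeas]
  refine lintegral_congr fun a => ?_
  rw [show (volume : Measure (Fin n → ℝ)) = Measure.pi fun _ => volume from volume_pi,
    ← lintegral_const_mul' _ _ ENNReal.ofReal_ne_top]
  refine lintegral_congr fun y => ?_
  have happ : ((MeasurableEquiv.piFinSuccAbove (fun _ : Fin (n+1) => ℝ) 0).symm (a, y))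
      = (0 : Fin (n+1)).insertNth a y := rfl
  simp only [Fm, happ]
  rw [Fin.prod_univ_succAbove _ 0, Fin.sum_univ_succAbove (fun k => Fin.insertNth 0 a y k) 0]
  simp only [Fin.insertNth_apply_same, Fin.insertNth_apply_succAbove]
  have : c + (a + ∑ j : Fin n, y j) = c + a + ∑ j : Fin n, y j := by ring
  rw [this, mul_assoc]

lemma main (n : ℕ) : ∀ b : ℝ, 2⁻¹ < b → b < 1 → ∃ K : ℝ≥0∞, K ≠ ∞ ∧ ∀ c : ℝ,
    ∫⁻ x : Fin n → ℝ, Fm n c x ≤ K * ENNReal.ofReal ((1 + |c|) ^ (-b)) := by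
  induction n with
  | zero =>
    intro b hb1 hb2
    refine ⟨1, ENNReal.one_ne_top, fun c => ?_⟩
    have h1 : (volume : Measure (Fin 0 → ℝ)) Set.univ = 1 := by
      rw [volume_pi, Measure.pi_univ]; simp
    simp only [Fm, Finset.univ_eq_empty, Finset.prod_empty, Finset.sum_empty, add_zero, one_mul]
    rw [lintegral_const, h1, mul_one]
    refine ENNReal.ofReal_le_ofReal ?_
    exact Real.rpow_le_rpow_of_exponent_le (by simp [abs_nonneg]) (by linarith)
  | succ n ih =>
    intro b hb1 hb2
    have hb0 : (0:ℝ) < b := lt_trans (by norm_num) hb1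
    have hb1' : (2:ℝ)⁻¹ < b := hb1
    set b₂ := (b+1)/2 with hb₂def
    have h1 : (2:ℝ)⁻¹ < b₂ := by rw [hb₂def]; rw [inv_eq_one_div]; linarith
    have h2 : b₂ < 1 := by rw [hb₂def]; linarith
    have h3 : b < b₂ := by rw [hb₂def]; linarith
    obtain ⟨K, hK, hKle⟩ := ih b₂ h1 h2
    obtain ⟨K', hK', hK'le⟩ := key hb1' h3 h2.le
    refine ⟨K * K', ENNReal.mul_ne_top hK hK', fun c => ?_⟩
    rw [fubini_Fm]
    calc ∫⁻ a : ℝ, ENNReal.ofReal ((1 + |a|) ^ (-(1:ℝ))) * ∫⁻ y, Fm n (c+a) y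
        ≤ ∫⁻ a : ℝ, ENNReal.ofReal ((1 + |a|) ^ (-(1:ℝ)))
            * (K * ENNReal.ofReal ((1+|c+a|)^(-b₂))) :=
          lintegral_mono fun a => mul_le_mul_right (hKle (c+a)) _
      _ = K * ∫⁻ a : ℝ, ENNReal.ofReal ((1 + |a|) ^ (-(1:ℝ)) * (1+|c+a|)^(-b₂)) := by
          rw [← lintegral_const_mul' _ _ hK]
          refine lintegral_congr fun a => ?_
          rw [ENNReal.ofReal_mul (by positivity)]
          ring
      _ ≤ K * (K' * ENNReal.ofReal ((1+|c|)^(-b))) := mul_le_mul_right (hK'le c) _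
      _ = (K * K') * ENNReal.ofReal ((1+|c|)^(-b)) := by rw [mul_assoc]


lemma norm_inv_le (t : ℝ) : ‖(Complex.I + (t:ℂ))⁻¹‖ ≤ 2 * (1 + |t|) ^ (-(1:ℝ)) := by
  have h1 : (1:ℝ) ≤ ‖Complex.I + (t:ℂ)‖ := by
    have := Complex.abs_im_le_norm (Complex.I + t)
    simpa using this
  have h2 : |t| ≤ ‖Complex.I + (t:ℂ)‖ := by
    have := Complex.abs_re_le_norm (Complex.I + t)
    simpa using this
  have habs : (1 + |t|)/2 ≤ ‖Complex.I + (t:ℂ)‖ := by linarith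
  calc ‖(Complex.I + (t:ℂ))⁻¹‖ = (‖Complex.I + (t:ℂ)‖)⁻¹ := by
        rw [norm_inv]
    _ ≤ ((1 + |t|)/2)⁻¹ := inv_anti₀ (by positivity) habs
    _ = 2 * (1 + |t|) ^ (-(1:ℝ)) := by
        rw [Real.rpow_neg_one]
        rw [inv_div, div_eq_mul_inv]

end LnAux

set_option maxHeartbeats 1000000 in
/-- The mollifier `L_n(x) = (i + x₁ + ⋯ + xₙ)⁻¹ ∏ₖ (i + x_k)⁻¹` is Lebesgue integrable on ℝⁿ. -/
theorem Ln_integrable (n : ℕ) :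
    Integrable (fun x : Fin n → ℝ =>
      (Complex.I + ∑ k, (x k : ℂ))⁻¹ * ∏ k, (Complex.I + (x k : ℂ))⁻¹)
      (volume : Measure (Fin n → ℝ)) := by
  have hne : ∀ t : ℝ, Complex.I + (t : ℂ) ≠ 0 := by
    intro t h
    have := congrArg Complex.im h
    simp at this
  have hcastsum : ∀ x : Fin n → ℝ, (∑ k, ((x k : ℝ):ℂ)) = ((∑ k, x k : ℝ) : ℂ) := by
    intro x; push_cast; ring
  constructor
  · have hsum : Continuous fun x : Fin n → ℝ => Complex.I + ∑ k, (x k : ℂ) :=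
      continuous_const.add (continuous_finset_sum _ fun k _ =>
        Complex.continuous_ofReal.comp (continuous_apply k))
    have hne2 : ∀ x : Fin n → ℝ, Complex.I + ∑ k, ((x k : ℝ) : ℂ) ≠ 0 := by
      intro x
      rw [hcastsum x]; exact hne _
    exact ((hsum.inv₀ hne2).mul (continuous_finset_prod _ fun k _ =>
      (continuous_const.add (Complex.continuous_ofReal.comp (continuous_apply k))).inv₀
        (fun x => hne (x k)))).aestronglyMeasurable
  · obtain ⟨K, hK, hKle⟩ := LnAux.main n (3/4) (by norm_num) (by norm_num)
    rw [HasFiniteIntegral]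
    have hpt : ∀ x : Fin n → ℝ,
        (‖(Complex.I + ∑ k, (x k : ℂ))⁻¹ * ∏ k, (Complex.I + (x k : ℂ))⁻¹‖₊ : ℝ≥0∞)
          ≤ ENNReal.ofReal (2^(n+1)) * LnAux.Fm n 0 x := by
      intro x
      rw [← enorm_eq_nnnorm, ← ofReal_norm]
      have hnorm : ‖(Complex.I + ∑ k, (x k : ℂ))⁻¹ * ∏ k, (Complex.I + (x k : ℂ))⁻¹‖
          ≤ (2 * (1 + |∑ k, x k|) ^ (-(1:ℝ))) * ∏ k, (2 * (1 + |x k|) ^ (-(1:ℝ))) := by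
        rw [norm_mul, norm_prod]
        refine mul_le_mul ?_ ?_ (Finset.prod_nonneg fun k _ => norm_nonneg _) (by positivity)
        · rw [hcastsum x]; exact LnAux.norm_inv_le _
        · exact Finset.prod_le_prod (fun k _ => norm_nonneg _) fun k _ => LnAux.norm_inv_le _
      refine le_trans (ENNReal.ofReal_le_ofReal hnorm) ?_
      have hprod : ∏ k, (2 * (1 + |x k|) ^ (-(1:ℝ)))
          = 2^n * ∏ k, (1 + |x k|) ^ (-(1:ℝ)) := by
        rw [Finset.prod_mul_distrib, Finset.prod_const]
        simp
      rw [hprod]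
      have heq : (2 * (1 + |∑ k, x k|) ^ (-(1:ℝ))) * (2^n * ∏ k, (1 + |x k|) ^ (-(1:ℝ)))
          = 2^(n+1) * ((∏ k, (1 + |x k|) ^ (-(1:ℝ))) * (1 + |(0:ℝ) + ∑ k, x k|) ^ (-(1:ℝ))) := by
        rw [zero_add]; ring
      rw [heq, ENNReal.ofReal_mul (by positivity)]
      refine mul_le_mul_right ?_ _
      rw [ENNReal.ofReal_mul (by positivity), LnAux.Fm]
      rw [ENNReal.ofReal_prod_of_nonneg (fun k _ => by positivity)]
    refine lt_of_le_of_lt (lintegral_mono hpt) ?_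
    rw [lintegral_const_mul' _ _ ENNReal.ofReal_ne_top]
    refine lt_of_le_of_lt (mul_le_mul_right (hKle 0) _) ?_
    exact ENNReal.mul_lt_top ENNReal.ofReal_lt_top
      (ENNReal.mul_lt_top hK.lt_top ENNReal.ofReal_lt_top)
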